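/- Let B be a commutative R-algebra carrying a skew-symmetric R-bilinear bracket [−,−] : B × B → B which is a derivation in each variable, and a cyclically symmetric R-trilinear bracket [−,−,−] : B³ → B which is a derivation in each variable. Let S ⊆ B be a subset generating B as an R-algebra. If the quasi-Jacobi identity [[x,y],z] + [[y,z],x] + [[z,x],y] = [x,y,z] − [y,x,z] holds for all x, y, z ∈ S, then it holds for all x, y, z ∈ B. -/
import Mathlib


/-- If a skew-symmetric biderivation `[-,-]` and a cyclically symmetric
triderivation `[-,-,-]` on a commutative algebra `B` satisfy the quasi-Jacobi
identity on a generating set `S`, then they satisfy it on all of `B`. -/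
theorem quasi_jacobi_of_generators {R : Type*} [CommRing R]
    {B : Type*} [CommRing B] [Algebra R B]
    (b2 : B →ₗ[R] B →ₗ[R] B) (b3 : B →ₗ[R] B →ₗ[R] B →ₗ[R] B)
    (hskew : ∀ x y : B, b2 x y = - b2 y x)
    (hcyc : ∀ x y z : B, b3 x y z = b3 z x y)
    (hd2₁ : ∀ u v y : B, b2 (u * v) y = b2 u y * v + u * b2 v y)
    (hd2₂ : ∀ x u v : B, b2 x (u * v) = b2 x u * v + u * b2 x v)
    (hd3₁ : ∀ u v y z : B, b3 (u * v) y z = b3 u y z * v + u * b3 v y z)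
    (hd3₂ : ∀ x u v z : B, b3 x (u * v) z = b3 x u z * v + u * b3 x v z)
    (hd3₃ : ∀ x y u v : B, b3 x y (u * v) = b3 x y u * v + u * b3 x y v)
    (S : Set B) (hS : Algebra.adjoin R S = ⊤)
    (hJ : ∀ x ∈ S, ∀ y ∈ S, ∀ z ∈ S,
      b2 (b2 x y) z + b2 (b2 y z) x + b2 (b2 z x) y = b3 x y z - b3 y x z) :
    ∀ x y z : B,
      b2 (b2 x y) z + b2 (b2 y z) x + b2 (b2 z x) y = b3 x y z - b3 y x z := by
  -- the defect of the quasi-Jacobi identity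
  set J : B → B → B → B := fun x y z =>
    b2 (b2 x y) z + b2 (b2 y z) x + b2 (b2 z x) y - b3 x y z + b3 y x z with hJdef
  -- derivations kill 1 and the image of R
  have b2one₂ : ∀ x : B, b2 x 1 = 0 := by
    intro x
    have h := hd2₂ x 1 1
    rw [mul_one, one_mul, mul_one] at h
    have : b2 x 1 + 0 = b2 x 1 + b2 x 1 := by rw [add_zero]; exact h
    exact (add_left_cancel this).symm
  have b2one₁ : ∀ x : B, b2 (1 : B) x = 0 := by
    intro x; rw [hskew, b2one₂, neg_zero]
  have b2c₂ : ∀ (x : B) (r : R), b2 x (algebraMap R B r) = 0 := by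
    intro x r
    rw [Algebra.algebraMap_eq_smul_one, map_smul, b2one₂, smul_zero]
  have b2c₁ : ∀ (r : R) (x : B), b2 (algebraMap R B r) x = 0 := by
    intro r x; rw [hskew, b2c₂, neg_zero]
  have b3one₃ : ∀ x y : B, b3 x y 1 = 0 := by
    intro x y
    have h := hd3₃ x y 1 1
    rw [mul_one, one_mul, mul_one] at h
    have : b3 x y 1 + 0 = b3 x y 1 + b3 x y 1 := by rw [add_zero]; exact h
    exact (add_left_cancel this).symm
  have b3c₃ : ∀ (x y : B) (r : R), b3 x y (algebraMap R B r) = 0 := by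
    intro x y r
    rw [Algebra.algebraMap_eq_smul_one, map_smul, b3one₃, smul_zero]
  have b3c₁ : ∀ (r : R) (x y : B), b3 (algebraMap R B r) x y = 0 := by
    intro r x y; rw [hcyc, hcyc, b3c₃]
  have b3c₂ : ∀ (x : B) (r : R) (y : B), b3 x (algebraMap R B r) y = 0 := by
    intro x r y; rw [hcyc, b3c₃]
  -- J is a derivation in each of the three variables
  have mul1 : ∀ u v y z : B, J (u * v) y z = J u y z * v + u * J v y z := by
    intro u v y z
    simp only [hJdef]
    simp only [hd2₁, hd2₂, hd3₁, hd3₂, hd3₃, map_add, LinearMap.add_apply]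
    linear_combination (b2 v y) * hskew z u + (b2 u y) * hskew z v
  have mul2 : ∀ x u v z : B, J x (u * v) z = J x u z * v + u * J x v z := by
    intro x u v z
    simp only [hJdef]
    simp only [hd2₁, hd2₂, hd3₁, hd3₂, hd3₃, map_add, LinearMap.add_apply]
    linear_combination (b2 v z) * hskew x u + (b2 u z) * hskew x v
  have mul3 : ∀ x y u v : B, J x y (u * v) = J x y u * v + u * J x y v := by
    intro x y u v
    simp only [hJdef]
    simp only [hd2₁, hd2₂, hd3₁, hd3₂, hd3₃, map_add, LinearMap.add_apply]
    linear_combination (b2 v x) * hskew y u + (b2 u x) * hskew y v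
  -- J is additive in each variable
  have add1 : ∀ a b y z : B, J (a + b) y z = J a y z + J b y z := by
    intro a b y z
    simp only [hJdef, map_add, LinearMap.add_apply]
    ring
  have add2 : ∀ x a b z : B, J x (a + b) z = J x a z + J x b z := by
    intro x a b z
    simp only [hJdef, map_add, LinearMap.add_apply]
    ring
  have add3 : ∀ x y a b : B, J x y (a + b) = J x y a + J x y b := by
    intro x y a b
    simp only [hJdef, map_add, LinearMap.add_apply]
    ring
  -- J vanishes when any argument is in the image of R
  have alg1 : ∀ (r : R) (y z : B), J (algebraMap R B r) y z = 0 := by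
    intro r y z
    simp only [hJdef, b2c₁, b2c₂, b3c₁, b3c₂, map_zero, LinearMap.zero_apply]
    ring
  have alg2 : ∀ (x : B) (r : R) (z : B), J x (algebraMap R B r) z = 0 := by
    intro x r z
    simp only [hJdef, b2c₁, b2c₂, b3c₁, b3c₂, map_zero, LinearMap.zero_apply]
    ring
  have alg3 : ∀ (x y : B) (r : R), J x y (algebraMap R B r) = 0 := by
    intro x y r
    simp only [hJdef, b2c₁, b2c₂, b3c₃, map_zero, LinearMap.zero_apply]
    ring
  have memtop : ∀ b : B, b ∈ Algebra.adjoin R S := by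
    intro b; rw [hS]; exact Algebra.mem_top
  -- induction, one variable at a time
  have h1 : ∀ x ∈ S, ∀ y ∈ S, ∀ z : B, J x y z = 0 := by
    intro x hx y hy z
    induction memtop z using Algebra.adjoin_induction with
    | mem s hs =>
        have h := hJ x hx y hy s hs
        simp only [hJdef]
        linear_combination h
    | algebraMap r => exact alg3 x y r
    | add a b _ _ ha hb => rw [add3, ha, hb, add_zero]
    | mul a b _ _ ha hb => rw [mul3, ha, hb, zero_mul, mul_zero, add_zero]
  have h2 : ∀ x ∈ S, ∀ y z : B, J x y z = 0 := by
    intro x hx y z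
    induction memtop y using Algebra.adjoin_induction with
    | mem s hs => exact h1 x hx s hs z
    | algebraMap r => exact alg2 x r z
    | add a b _ _ ha hb => rw [add2, ha, hb, add_zero]
    | mul a b _ _ ha hb => rw [mul2, ha, hb, zero_mul, mul_zero, add_zero]
  have h3 : ∀ x y z : B, J x y z = 0 := by
    intro x y z
    induction memtop x using Algebra.adjoin_induction with
    | mem s hs => exact h2 s hs y z
    | algebraMap r => exact alg1 r y z
    | add a b _ _ ha hb => rw [add1, ha, hb, add_zero]
    | mul a b _ _ ha hb => rw [mul1, ha, hb, zero_mul, mul_zero, add_zero]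
  intro x y z
  have h := h3 x y z
  simp only [hJdef] at h
  linear_combination h
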